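/- Let M be the monodromy operator on a polarized ℚ[ω]-Hodge structure of ball type H (with Hodge filtration F^n ⊂ F^{n-1} = H_ℂ, dim F^n = 1, and h^{p,q} = 0 for p ≤ n−2) arising as the limit of a one-parameter degeneration, and suppose the fixed part (F^n)^M is nonzero. Let N = log(M^{un}) be the nilpotent part of M. Then N = 0, i.e., M is semisimple, and by Borel's monodromy theorem M has finite order. -/

import Mathlib

open Polynomial in
/-- A semisimple endomorphism whose `a`-th power is unipotent satisfies `f ^ a = 1`. -/
private lemma aux_ss_pow_eq_one {V : Type*} [AddCommGroup V] [Module ℂ V] [FiniteDimensional ℂ V]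
    (f : Module.End ℂ V) (a : ℕ) (hss : f.IsSemisimple)
    (hnil : IsNilpotent (f ^ a - 1)) : f ^ a = 1 := by
  obtain ⟨r, hr⟩ := hnil
  have h1 : minpoly ℂ f ∣ ((X : ℂ[X]) ^ a - 1) ^ (r + 1) := by
    apply minpoly.dvd
    have : (f ^ a - 1) ^ (r + 1) = 0 := by rw [pow_succ, hr, zero_mul]
    simpa [map_sub, map_pow] using this
  have h2 : minpoly ℂ f ∣ (X : ℂ[X]) ^ a - 1 :=
    (hss.minpoly_squarefree.dvd_pow_iff_dvd (Nat.succ_ne_zero r)).mp h1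
  obtain ⟨c, hc⟩ := h2
  have h3 : aeval f ((X : ℂ[X]) ^ a - 1) = 0 := by
    rw [hc, map_mul, minpoly.aeval, zero_mul]
  have h4 : f ^ a - 1 = 0 := by simpa [map_sub, map_pow] using h3
  rwa [sub_eq_zero] at h4

open Polynomial in
/-- A unipotent endomorphism of finite order is the identity. -/
private lemma aux_unip_pow_eq_one {V : Type*} [AddCommGroup V] [Module ℂ V]
    [FiniteDimensional ℂ V] (f : Module.End ℂ V) (a : ℕ) (ha : 0 < a)
    (hnil : IsNilpotent (f - 1)) (hpow : f ^ a = 1) : f = 1 := by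
  nontriviality (Module.End ℂ V)
  obtain ⟨r, hr⟩ := hnil
  have hint : IsIntegral ℂ f := .of_finite ℂ f
  have h1 : minpoly ℂ f ∣ (X : ℂ[X]) ^ a - 1 := by
    apply minpoly.dvd
    simpa [map_sub, map_pow] using sub_eq_zero.mpr hpow
  have hsqf : Squarefree ((X : ℂ[X]) ^ a - 1) := by
    have := Polynomial.separable_X_pow_sub_C (1 : ℂ)
      (by exact_mod_cast Nat.cast_ne_zero.mpr ha.ne') one_ne_zero
    simpa using this.squarefree
  have hq : Squarefree (minpoly ℂ f) := hsqf.squarefree_of_dvd h1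
  have h2 : minpoly ℂ f ∣ ((X : ℂ[X]) - 1) ^ (r + 1) := by
    apply minpoly.dvd
    have : (f - 1) ^ (r + 1) = 0 := by rw [pow_succ, hr, zero_mul]
    simpa [map_sub] using this
  have h3 : minpoly ℂ f ∣ (X : ℂ[X]) - 1 :=
    (hq.dvd_pow_iff_dvd (Nat.succ_ne_zero r)).mp h2
  have hXm : ((X : ℂ[X]) - 1).Monic := by
    simpa using monic_X_sub_C (1 : ℂ)
  have hdeg : ((X : ℂ[X]) - 1).natDegree ≤ (minpoly ℂ f).natDegree := by
    have : ((X : ℂ[X]) - 1).natDegree = 1 := by simpa using natDegree_X_sub_C (1 : ℂ)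
    rw [this]
    exact minpoly.natDegree_pos hint
  have heq : minpoly ℂ f = (X : ℂ[X]) - 1 :=
    Polynomial.eq_of_dvd_of_natDegree_le_of_leadingCoeff h3 hdeg
      (by rw [(minpoly.monic hint).leadingCoeff, hXm.leadingCoeff])
  have h5 := minpoly.aeval ℂ f
  rw [heq] at h5
  have h4 : f - 1 = 0 := by simpa [map_sub] using h5
  rwa [sub_eq_zero] at h4

/-- Finite order of the monodromy of a degeneration of ball-type Hodge structures.
`V = H_ℂ` carries a polarization `h` (a Hermitian form, linear in the first and
conjugate-linear in the second variable) of signature `(1, dim−1)`: positive on the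
one-dimensional piece `F = F^n` (the `(n,0)`-part) and negative on an `h`-orthogonal
complement `W` (the `(n−1,1)`-part); all other Hodge pieces vanish (ball type).  The
monodromy `M` preserves `h`, has Jordan decomposition `M = M^{un} ∘ M^{ss}` with
`M^{un}` unipotent (so `N = log M^{un}` is defined) and `M^{ss}` semisimple, is
quasi-unipotent (Borel), and its fixed part in `F` is nonzero.  Then `N = 0`,
i.e. `M^{un} = 1` so `M = M^{ss}` is semisimple, and `M` has finite order. -/
theorem monodromy_finite_order
    {V : Type*} [AddCommGroup V] [Module ℂ V] [FiniteDimensional ℂ V]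
    (M Mun Mss : Module.End ℂ V)
    (hjordan : M = Mun * Mss) (hcomm : Commute Mun Mss)
    (hun : IsNilpotent (Mun - 1)) (hss : Mss.IsSemisimple)
    (hquasi : ∃ a : ℕ, 0 < a ∧ IsNilpotent (M ^ a - 1))
    (h : V →ₗ[ℂ] V →ₗ⋆[ℂ] ℂ)
    (hherm : ∀ x y, h x y = starRingEnd ℂ (h y x))
    (hinv : ∀ x y, h (M x) (M y) = h x y)
    (F W : Submodule ℂ V) (hFrank : Module.finrank ℂ F = 1)
    (hcompl : IsCompl F W)
    (horth : ∀ x ∈ F, ∀ y ∈ W, h x y = 0)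
    (hpos : ∀ x ∈ F, x ≠ 0 → 0 < (h x x).re)
    (hneg : ∀ y ∈ W, y ≠ 0 → (h y y).re < 0)
    (hfix : ∃ x ∈ F, x ≠ 0 ∧ M x = x) :
    Mun = 1 ∧ M = Mss ∧ ∃ k : ℕ, 0 < k ∧ M ^ k = 1 := by
  obtain ⟨a, ha, haM⟩ := hquasi
  obtain ⟨x, hxF, hx0, hMx⟩ := hfix
  -- Step 1 (geometry): `M ^ a = 1`.
  -- F is spanned by x
  have hFspan : F = Submodule.span ℂ {x} := by
    refine (Submodule.eq_of_le_of_finrank_eq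
      ((Submodule.span_le).mpr (by simpa using hxF)) ?_).symm
    rw [finrank_span_singleton hx0, hFrank]
  have hxx : h x x ≠ 0 := fun h0 => by
    have := hpos x hxF hx0; rw [h0] at this; simp at this
  -- everything orthogonal to x lies in W
  have hmemW : ∀ v : V, h x v = 0 → v ∈ W := by
    intro v hv
    have hvtop : v ∈ F ⊔ W := by rw [hcompl.sup_eq_top]; trivial
    obtain ⟨f, hf, w, hw, hfw⟩ := Submodule.mem_sup.mp hvtop
    rw [hFspan, Submodule.mem_span_singleton] at hf
    obtain ⟨c, rfl⟩ := hf
    have hxw : h x w = 0 := horth x hxF w hw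
    have hexp : h x (c • x + w) = starRingEnd ℂ c * h x x := by
      rw [map_add, map_smulₛₗ, hxw, add_zero, smul_eq_mul]
    rw [hfw, hv] at hexp
    have hc : c = 0 := by
      have := (mul_eq_zero.mp hexp.symm).resolve_right hxx
      simpa using this
    rw [← hfw, hc, zero_smul, zero_add]
    exact hw
  have hMnx : ∀ n : ℕ, (M ^ n) x = x := by
    intro n
    induction n with
    | zero => simp
    | succ n ih => rw [pow_succ, Module.End.mul_apply, hMx, ih]
  have hMninv : ∀ (n : ℕ) (u v : V), h ((M ^ n) u) ((M ^ n) v) = h u v := by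
    intro n
    induction n with
    | zero => simp
    | succ n ih =>
      intro u v
      rw [pow_succ', Module.End.mul_apply, Module.End.mul_apply, hinv]
      exact ih u v
  set P : Module.End ℂ V := M ^ a with hP
  have hPx : P x = x := hMnx a
  have hPinv : ∀ u v, h (P u) (P v) = h u v := hMninv a
  have hPW : ∀ w ∈ W, P w ∈ W := by
    intro w hw
    apply hmemW
    have h1 : h (P x) (P w) = h x w := hPinv x w
    rw [hPx, horth x hxF w hw] at h1
    exact h1
  -- P is the identity on W
  have hPfixW : ∀ w ∈ W, P w = w := by
    by_contra hcon
    push_neg at hcon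
    obtain ⟨w, hwW, hwne⟩ := hcon
    set t : Module.End ℂ V := P - 1 with ht
    have htapp : ∀ y : V, t y = P y - y := fun y => by
      rw [ht, LinearMap.sub_apply, Module.End.one_apply]
    obtain ⟨r, hr⟩ := haM
    have htw : t w ≠ 0 := by rw [htapp]; simpa [sub_eq_zero] using hwne
    have htWmem : ∀ n : ℕ, (t ^ n) w ∈ W := by
      intro n
      induction n with
      | zero => simpa using hwW
      | succ n ih =>
        rw [pow_succ', Module.End.mul_apply, htapp]
        exact sub_mem (hPW _ ih) ih
    have hex : ∃ n, (t ^ (n + 1)) w = 0 := ⟨r, by rw [pow_succ, hr, zero_mul]; rfl⟩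
    classical
    set m := Nat.find hex with hm
    have hm0 : (t ^ (m + 1)) w = 0 := Nat.find_spec hex
    have hmpos : 0 < m := by
      rcases Nat.eq_zero_or_pos m with h0 | h0
      · exfalso; apply htw; have := hm0; rw [h0] at this; simpa using this
      · exact h0
    set u : V := (t ^ m) w with hu
    set v : V := (t ^ (m - 1)) w with hv
    have hune : u ≠ 0 := by
      have := Nat.find_min hex (show m - 1 < m from Nat.sub_lt hmpos one_pos)
      rw [hu]
      rwa [Nat.sub_add_cancel hmpos] at this
    have htv : t v = u := by
      rw [hv, hu, ← Module.End.mul_apply, ← pow_succ', Nat.sub_add_cancel hmpos]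
    have htu : t u = 0 := by
      rw [hu, ← Module.End.mul_apply, ← pow_succ']
      exact hm0
    have hPu : P u = u := by
      have := htapp u; rw [htu] at this
      exact (sub_eq_zero.mp this.symm)
    have hPv : P v = v + u := by
      have h' := htapp v; rw [htv] at h'
      rw [eq_sub_iff_add_eq, add_comm] at h'
      exact h'.symm
    have huW : u ∈ W := htWmem m
    have hvW : v ∈ W := htWmem (m - 1)
    have e1 : h (v + u) (v + u) = h v v := by rw [← hPv]; exact hPinv v v
    have e2 : h (v + u + u) (v + u + u) = h v v := by
      have hPPv : P (P v) = v + u + u := by rw [hPv, map_add, hPv, hPu]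
      have := hPinv (P v) (P v)
      rw [hPPv, hPv] at this
      rw [this]; exact e1
    simp only [map_add, LinearMap.add_apply] at e1 e2
    have huu : h u u = 0 := by linear_combination (e2 - 2 * e1) / 2
    have := hneg u huW hune
    rw [huu] at this
    simp at this
  -- conclude `M ^ a = 1`
  have hP1 : M ^ a = 1 := by
    rw [← hP]
    ext z
    have hztop : z ∈ F ⊔ W := by rw [hcompl.sup_eq_top]; trivial
    obtain ⟨f, hf, w, hw, hfw⟩ := Submodule.mem_sup.mp hztop
    rw [hFspan, Submodule.mem_span_singleton] at hf
    obtain ⟨c, rfl⟩ := hf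
    rw [← hfw]
    rw [map_add, map_smul, hPx, hPfixW w hw]
    rfl
  -- Step 2 (algebra): conclude `Mun = 1`.
  have hMa : M ^ a = Mun ^ a * Mss ^ a := by rw [hjordan, hcomm.mul_pow]
  have hMunNil : IsNilpotent (Mun ^ a - 1) := by
    rw [← mul_geom_sum]
    have hc : Commute (Mun - 1) (∑ i ∈ Finset.range a, Mun ^ i) :=
      Commute.sum_right _ _ _ fun i _ =>
        (((Commute.refl Mun).pow_right i).sub_left (Commute.one_left _))
    exact hc.isNilpotent_mul_right hun
  have hprod1 : Mun ^ a * Mss ^ a = 1 := by rw [← hMa]; exact hP1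
  have hssNil : IsNilpotent (Mss ^ a - 1) := by
    have heq : Mss ^ a - 1 = (1 - Mun ^ a) * Mss ^ a := by
      rw [sub_mul, one_mul, hprod1]
    rw [heq]
    have hnil : IsNilpotent (1 - Mun ^ a) := by
      have := hMunNil.neg
      rwa [neg_sub] at this
    have hc : Commute (1 - Mun ^ a) (Mss ^ a) :=
      (Commute.one_left _).sub_left ((hcomm.pow_pow a a))
    exact hc.isNilpotent_mul_right hnil
  have hss1 : Mss ^ a = 1 := aux_ss_pow_eq_one Mss a hss hssNil
  have hun1 : Mun ^ a = 1 := by rwa [hss1, mul_one] at hprod1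
  have hMun : Mun = 1 := aux_unip_pow_eq_one Mun a ha hun hun1
  exact ⟨hMun, by rw [hjordan, hMun, one_mul], a, ha, hP1⟩
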